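/- Let γ : 𝕋 → M be a curve into a metric space and fix v, r ∈ [0,1]. Consider the affine map ψ^{v,r}(t) = v + r·t mod 1. Then for any dyadic interval I ⊆ [0,1] with ψ^{v,r}(I) = [x,z] and any y ∈ [x,z], one has δ₁(γ(x),γ(y),γ(z)) ≤ Σ δ_d(γ∘ψ^{v,r}(I′)), where the sum is over dyadic subintervals I′ ⊆ I with y ∈ ψ^{v,r}(I′), and δ_d(γ∘ψ^{v,r}([a,b])) := δ₁(γ(ψ^{v,r}(a)), γ(ψ^{v,r}((a+b)/2)), γ(ψ^{v,r}(b))). -/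

import Mathlib

open ENNReal

/-- The dyadic tower: `dyadicK t n k i` is the index (at level `n + i`) of a dyadic
subinterval of `[k/2ⁿ, (k+1)/2ⁿ]` containing `t`. -/
noncomputable def dyadicK (t : ℝ) (n k : ℕ) : ℕ → ℕ
  | 0 => k
  | i + 1 =>
    if t ≤ ((2 * dyadicK t n k i : ℕ) + 1 : ℝ) / 2 ^ (n + i + 1) then 2 * dyadicK t n k i
    else 2 * dyadicK t n k i + 1

lemma dyadicK_mem (t : ℝ) (n k : ℕ)
    (ht : t ∈ Set.Icc ((k : ℝ) / 2 ^ n) (((k : ℝ) + 1) / 2 ^ n)) (i : ℕ) :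
    t ∈ Set.Icc ((dyadicK t n k i : ℝ) / 2 ^ (n + i))
      (((dyadicK t n k i : ℝ) + 1) / 2 ^ (n + i)) := by
  induction i with
  | zero => simpa [dyadicK] using ht
  | succ i ih =>
    set m := dyadicK t n k i with hm
    rw [dyadicK]
    split_ifs with h
    · constructor
      · push_cast
        calc ((2 * m : ℝ)) / 2 ^ (n + i + 1) = (m : ℝ) / 2 ^ (n + i) := by
              rw [pow_succ]; field_simp
          _ ≤ t := ih.1
      · push_cast at h ⊢
        exact h
    · push_cast at h ⊢
      constructor
      · exact (not_le.mp h).le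
      · calc t ≤ ((m : ℝ) + 1) / 2 ^ (n + i) := ih.2
          _ = ((2 * m + 1 : ℝ) + 1) / 2 ^ (n + i + 1) := by
              rw [pow_succ]; field_simp; ring

lemma dyadicK_bounds (t : ℝ) (n k : ℕ) (i : ℕ) :
    k * 2 ^ i ≤ dyadicK t n k i ∧ dyadicK t n k i + 1 ≤ (k + 1) * 2 ^ i := by
  induction i with
  | zero => simp [dyadicK]
  | succ i ih =>
    obtain ⟨h1, h2⟩ := ih
    have b1 := Nat.mul_le_mul_left 2 h1
    have b2 := Nat.mul_le_mul_left 2 h2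
    have a1 : k * (2 ^ i * 2) = 2 * (k * 2 ^ i) := by ring
    have a2 : (k + 1) * (2 ^ i * 2) = 2 * ((k + 1) * 2 ^ i) := by ring
    rw [dyadicK, pow_succ]
    split_ifs with h <;> omega

lemma dyadicK_subset (t : ℝ) (n k : ℕ) (i : ℕ) :
    Set.Icc ((dyadicK t n k i : ℝ) / 2 ^ (n + i))
        (((dyadicK t n k i : ℝ) + 1) / 2 ^ (n + i)) ⊆
      Set.Icc ((k : ℝ) / 2 ^ n) (((k : ℝ) + 1) / 2 ^ n) := by
  obtain ⟨h1, h2⟩ := dyadicK_bounds t n k i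
  apply Set.Icc_subset_Icc
  · rw [div_le_div_iff₀ (by positivity) (by positivity)]
    calc (k : ℝ) * 2 ^ (n + i) = (k * 2 ^ i : ℕ) * 2 ^ n := by push_cast; ring
      _ ≤ (dyadicK t n k i : ℝ) * 2 ^ n :=
          mul_le_mul_of_nonneg_right (by exact_mod_cast h1) (by positivity)
  · rw [div_le_div_iff₀ (by positivity) (by positivity)]
    calc ((dyadicK t n k i : ℝ) + 1) * 2 ^ n = ((dyadicK t n k i + 1 : ℕ) : ℝ) * 2 ^ n := by
          push_cast; ring
      _ ≤ ((k + 1) * 2 ^ i : ℕ) * 2 ^ n :=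
          mul_le_mul_of_nonneg_right (by exact_mod_cast h2) (by positivity)
      _ = ((k : ℝ) + 1) * 2 ^ (n + i) := by push_cast; ring

set_option maxHeartbeats 1000000 in
theorem delta_one_le_sum_delta_d {M : Type*} [MetricSpace M] (γ : ℝ → M)
    (hper : ∀ x, γ (x + 1) = γ x) (hcont : Continuous γ)
    (v r : ℝ) (hv : v ∈ Set.Icc (0 : ℝ) 1) (hr : r ∈ Set.Icc (0 : ℝ) 1)
    (n k : ℕ) (hk : k < 2 ^ n) (t : ℝ)
    (ht : t ∈ Set.Icc ((k : ℝ) / 2 ^ n) (((k : ℝ) + 1) / 2 ^ n)) :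
    ENNReal.ofReal
        (dist (γ (v + r * ((k : ℝ) / 2 ^ n))) (γ (v + r * t)) +
          dist (γ (v + r * t)) (γ (v + r * (((k : ℝ) + 1) / 2 ^ n))) -
          dist (γ (v + r * ((k : ℝ) / 2 ^ n))) (γ (v + r * (((k : ℝ) + 1) / 2 ^ n)))) ≤
      ∑' p : {p : ℕ × ℕ //
          n ≤ p.1 ∧
          Set.Icc ((p.2 : ℝ) / 2 ^ p.1) (((p.2 : ℝ) + 1) / 2 ^ p.1) ⊆
            Set.Icc ((k : ℝ) / 2 ^ n) (((k : ℝ) + 1) / 2 ^ n) ∧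
          t ∈ Set.Icc ((p.2 : ℝ) / 2 ^ p.1) (((p.2 : ℝ) + 1) / 2 ^ p.1)},
        ENNReal.ofReal
          (dist (γ (v + r * ((p.1.2 : ℝ) / 2 ^ p.1.1)))
              (γ (v + r * (((p.1.2 : ℝ) + 1 / 2) / 2 ^ p.1.1))) +
            dist (γ (v + r * (((p.1.2 : ℝ) + 1 / 2) / 2 ^ p.1.1)))
              (γ (v + r * (((p.1.2 : ℝ) + 1) / 2 ^ p.1.1))) -
            dist (γ (v + r * ((p.1.2 : ℝ) / 2 ^ p.1.1)))
              (γ (v + r * (((p.1.2 : ℝ) + 1) / 2 ^ p.1.1)))) := by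
  classical
  -- abbreviations
  set S := {p : ℕ × ℕ //
      n ≤ p.1 ∧
      Set.Icc ((p.2 : ℝ) / 2 ^ p.1) (((p.2 : ℝ) + 1) / 2 ^ p.1) ⊆
        Set.Icc ((k : ℝ) / 2 ^ n) (((k : ℝ) + 1) / 2 ^ n) ∧
      t ∈ Set.Icc ((p.2 : ℝ) / 2 ^ p.1) (((p.2 : ℝ) + 1) / 2 ^ p.1)} with hS
  set F : S → ℝ≥0∞ := fun p =>
    ENNReal.ofReal
      (dist (γ (v + r * ((p.1.2 : ℝ) / 2 ^ p.1.1)))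
          (γ (v + r * (((p.1.2 : ℝ) + 1 / 2) / 2 ^ p.1.1))) +
        dist (γ (v + r * (((p.1.2 : ℝ) + 1 / 2) / 2 ^ p.1.1)))
          (γ (v + r * (((p.1.2 : ℝ) + 1) / 2 ^ p.1.1))) -
        dist (γ (v + r * ((p.1.2 : ℝ) / 2 ^ p.1.1)))
          (γ (v + r * (((p.1.2 : ℝ) + 1) / 2 ^ p.1.1)))) with hF
  set K : ℕ → ℕ := dyadicK t n k with hK
  -- δ₁ at level i, in ℝ≥0∞
  set f : ℕ → ℝ≥0∞ := fun i =>
    ENNReal.ofReal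
      (dist (γ (v + r * ((K i : ℝ) / 2 ^ (n + i)))) (γ (v + r * t)) +
        dist (γ (v + r * t)) (γ (v + r * (((K i : ℝ) + 1) / 2 ^ (n + i)))) -
        dist (γ (v + r * ((K i : ℝ) / 2 ^ (n + i))))
          (γ (v + r * (((K i : ℝ) + 1) / 2 ^ (n + i))))) with hf
  -- the tower as elements of S
  have gmem : ∀ i : ℕ, (⟨(n + i, K i), Nat.le_add_right n i, dyadicK_subset t n k i,
      dyadicK_mem t n k ht i⟩ : S) ∈ Set.univ := fun _ => trivial
  set g : ℕ → S := fun i => ⟨(n + i, K i), Nat.le_add_right n i, dyadicK_subset t n k i,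
    dyadicK_mem t n k ht i⟩ with hg
  have hginj : Function.Injective g := by
    intro i j h
    have : n + i = n + j := congrArg (fun p : S => p.1.1) h
    omega
  -- step inequality
  have hstep : ∀ i, f i ≤ F (g i) + f (i + 1) := by
    intro i
    have hmem := dyadicK_mem t n k ht i
    have hmid : ((2 * K i : ℕ) + 1 : ℝ) / 2 ^ (n + i + 1) = ((K i : ℝ) + 1 / 2) / 2 ^ (n + i) := by
      push_cast; rw [pow_succ]; field_simp
    have hlow : ((2 * K i : ℕ) : ℝ) / 2 ^ (n + i + 1) = (K i : ℝ) / 2 ^ (n + i) := by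
      push_cast; rw [pow_succ]; field_simp
    have hhigh : (((2 * K i : ℕ) : ℝ) + 1 + 1) / 2 ^ (n + i + 1)
        = ((K i : ℝ) + 1) / 2 ^ (n + i) := by
      push_cast; rw [pow_succ]; field_simp; ring
    set A := γ (v + r * ((K i : ℝ) / 2 ^ (n + i)))
    set B := γ (v + r * (((K i : ℝ) + 1 / 2) / 2 ^ (n + i)))
    set C := γ (v + r * (((K i : ℝ) + 1) / 2 ^ (n + i)))
    set T := γ (v + r * t)
    have hKs : K (i + 1) = if t ≤ ((2 * K i : ℕ) + 1 : ℝ) / 2 ^ (n + i + 1)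
        then 2 * K i else 2 * K i + 1 := rfl
    by_cases hcase : t ≤ ((2 * K i : ℕ) + 1 : ℝ) / 2 ^ (n + i + 1)
    · -- child = left half, endpoints A, B
      have hK1 : K (i + 1) = 2 * K i := by rw [hKs, if_pos hcase]
      have e1 : ((K (i + 1) : ℝ)) / 2 ^ (n + (i + 1)) = (K i : ℝ) / 2 ^ (n + i) := by
        rw [hK1, show n + (i + 1) = n + i + 1 from rfl]; exact_mod_cast hlow
      have e2 : ((K (i + 1) : ℝ) + 1) / 2 ^ (n + (i + 1)) = ((K i : ℝ) + 1 / 2) / 2 ^ (n + i) := by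
        rw [hK1, show n + (i + 1) = n + i + 1 from rfl]
        exact_mod_cast hmid
      have hfs : f (i + 1) = ENNReal.ofReal (dist A T + dist T B - dist A B) := by
        rw [hf]; simp only []
        rw [e1, e2]
      rw [hfs]
      refine le_trans (ENNReal.ofReal_le_ofReal ?_) (ENNReal.ofReal_add_le)
      have htri : dist T C ≤ dist T B + dist B C := dist_triangle T B C
      simp only [hF, hg]
      linarith [dist_triangle T B C]
    · have hK1 : K (i + 1) = 2 * K i + 1 := by rw [hKs, if_neg hcase]
      have e1 : ((K (i + 1) : ℝ)) / 2 ^ (n + (i + 1)) = ((K i : ℝ) + 1 / 2) / 2 ^ (n + i) := by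
        rw [hK1, show n + (i + 1) = n + i + 1 from rfl]
        exact_mod_cast hmid
      have e2 : ((K (i + 1) : ℝ) + 1) / 2 ^ (n + (i + 1)) = ((K i : ℝ) + 1) / 2 ^ (n + i) := by
        rw [hK1, show n + (i + 1) = n + i + 1 from rfl]
        exact_mod_cast hhigh
      have hfs : f (i + 1) = ENNReal.ofReal (dist B T + dist T C - dist B C) := by
        rw [hf]; simp only []
        rw [e1, e2]
      rw [hfs]
      refine le_trans (ENNReal.ofReal_le_ofReal ?_) (ENNReal.ofReal_add_le)
      simp only [hF, hg]
      linarith [dist_triangle A B T]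
  -- iterate
  have hiter : ∀ N, f 0 ≤ (∑ i ∈ Finset.range N, F (g i)) + f N := by
    intro N
    induction N with
    | zero => simp
    | succ N ih =>
      calc f 0 ≤ (∑ i ∈ Finset.range N, F (g i)) + f N := ih
        _ ≤ (∑ i ∈ Finset.range N, F (g i)) + (F (g N) + f (N + 1)) := by
            gcongr; exact hstep N
        _ = (∑ i ∈ Finset.range (N + 1), F (g i)) + f (N + 1) := by
            rw [Finset.sum_range_succ]; ring
  have hsum : ∀ N, (∑ i ∈ Finset.range N, F (g i)) ≤ ∑' p : S, F p := fun N =>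
    le_trans (ENNReal.sum_le_tsum _) (ENNReal.tsum_comp_le_tsum_of_injective hginj F)
  have hbound : ∀ N, f 0 ≤ (∑' p : S, F p) + f N := fun N =>
    le_trans (hiter N) (by gcongr; exact hsum N)
  -- limit : f N → 0
  have hpow : Filter.Tendsto (fun i : ℕ => (1 : ℝ) / 2 ^ (n + i)) Filter.atTop (nhds 0) := by
    have h1 : Filter.Tendsto (fun m : ℕ => ((1 : ℝ) / 2) ^ m) Filter.atTop (nhds 0) :=
      tendsto_pow_atTop_nhds_zero_of_lt_one (by norm_num) (by norm_num)
    have h2 : Filter.Tendsto (fun i : ℕ => n + i) Filter.atTop Filter.atTop :=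
      Filter.tendsto_atTop_mono (fun i => Nat.le_add_left i n) Filter.tendsto_id
    have := h1.comp h2
    simpa [div_pow, Function.comp_def] using this
  have hl : Filter.Tendsto (fun i : ℕ => (K i : ℝ) / 2 ^ (n + i)) Filter.atTop (nhds t) := by
    have hle : ∀ i, t - 1 / 2 ^ (n + i) ≤ (K i : ℝ) / 2 ^ (n + i) := by
      intro i
      have h := (dyadicK_mem t n k ht i).2
      have : ((K i : ℝ) + 1) / 2 ^ (n + i) = (K i : ℝ) / 2 ^ (n + i) + 1 / 2 ^ (n + i) := by
        ring
      linarith [h, this ▸ h]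
    have hge : ∀ i, (K i : ℝ) / 2 ^ (n + i) ≤ t := fun i => (dyadicK_mem t n k ht i).1
    have htl : Filter.Tendsto (fun i : ℕ => t - 1 / 2 ^ (n + i)) Filter.atTop (nhds t) := by
      have := (tendsto_const_nhds :
        Filter.Tendsto (fun _ : ℕ => t) Filter.atTop (nhds t)).sub hpow
      simpa using this
    exact tendsto_of_tendsto_of_tendsto_of_le_of_le htl tendsto_const_nhds
      hle hge
  have hu : Filter.Tendsto (fun i : ℕ => ((K i : ℝ) + 1) / 2 ^ (n + i)) Filter.atTop (nhds t) := by
    have : (fun i : ℕ => ((K i : ℝ) + 1) / 2 ^ (n + i))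
        = fun i => (K i : ℝ) / 2 ^ (n + i) + 1 / 2 ^ (n + i) := by
      funext i; ring
    rw [this]
    simpa using hl.add hpow
  have hA : Filter.Tendsto (fun i : ℕ => γ (v + r * ((K i : ℝ) / 2 ^ (n + i)))) Filter.atTop
      (nhds (γ (v + r * t))) :=
    (hcont.tendsto _).comp (tendsto_const_nhds.add (tendsto_const_nhds.mul hl))
  have hC : Filter.Tendsto (fun i : ℕ => γ (v + r * (((K i : ℝ) + 1) / 2 ^ (n + i)))) Filter.atTop
      (nhds (γ (v + r * t))) :=
    (hcont.tendsto _).comp (tendsto_const_nhds.add (tendsto_const_nhds.mul hu))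
  have hf0 : Filter.Tendsto f Filter.atTop (nhds 0) := by
    have hreal : Filter.Tendsto (fun i : ℕ =>
        dist (γ (v + r * ((K i : ℝ) / 2 ^ (n + i)))) (γ (v + r * t)) +
          dist (γ (v + r * t)) (γ (v + r * (((K i : ℝ) + 1) / 2 ^ (n + i)))) -
          dist (γ (v + r * ((K i : ℝ) / 2 ^ (n + i))))
            (γ (v + r * (((K i : ℝ) + 1) / 2 ^ (n + i))))) Filter.atTop (nhds 0) := by
      have h1 := hA.dist (tendsto_const_nhds (x := γ (v + r * t)))
      have h2 := (tendsto_const_nhds (x := γ (v + r * t))).dist hC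
      have h3 := hA.dist hC
      have := (h1.add h2).sub h3
      simpa using this
    have := (ENNReal.continuous_ofReal.tendsto 0).comp hreal
    simpa [hf, Function.comp_def] using this
  have hfin : f 0 ≤ ∑' p : S, F p := by
    have htend : Filter.Tendsto (fun N => (∑' p : S, F p) + f N) Filter.atTop
        (nhds ((∑' p : S, F p) + 0)) := Filter.Tendsto.const_add _ hf0
    rw [add_zero] at htend
    exact ge_of_tendsto' htend hbound
  have hf00 : f 0 = ENNReal.ofReal
      (dist (γ (v + r * ((k : ℝ) / 2 ^ n))) (γ (v + r * t)) +
        dist (γ (v + r * t)) (γ (v + r * (((k : ℝ) + 1) / 2 ^ n))) -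
        dist (γ (v + r * ((k : ℝ) / 2 ^ n))) (γ (v + r * (((k : ℝ) + 1) / 2 ^ n)))) := by
    simp [hf, hK, dyadicK]
  rw [← hf00]
  exact hfin
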